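/- Let A be a commutative ring and f : L• → L•' a morphism of three-term complexes of flat A-modules which induces, for every A-module Q, an isomorphism on h₀(− ⊗_A Q) and a monomorphism on h₋₁(− ⊗_A Q), and which moreover induces a surjection h₁(L•) → h₁(L•') on the degree-1 homology. Then for every A-module Q the induced map h₁(L• ⊗_A Q) → h₁(L•' ⊗_A Q) is surjective. -/

import Mathlib

universe u

/-- The condition that a morphism of three-term complexes (with components
`f₀`, `f₋₁` in degrees `0` and `-1`) is a *pseudo-isomorphism*: for every
`A`-module `Q`, it induces an isomorphism on `h₀(− ⊗ Q)` (first two clauses: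
surjectivity and injectivity modulo boundaries) and a monomorphism on
`h₋₁(− ⊗ Q)` (third clause). -/
def IsPsi {A : Type u} [CommRing A]
    {L1 L0 Lm1 M1 M0 Mm1 : Type u}
    [AddCommGroup L1] [AddCommGroup L0] [AddCommGroup Lm1]
    [AddCommGroup M1] [AddCommGroup M0] [AddCommGroup Mm1]
    [Module A L1] [Module A L0] [Module A Lm1]
    [Module A M1] [Module A M0] [Module A Mm1]
    (d1 : L1 →ₗ[A] L0) (d0 : L0 →ₗ[A] Lm1)
    (e1 : M1 →ₗ[A] M0) (e0 : M0 →ₗ[A] Mm1)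
    (f0 : L0 →ₗ[A] M0) (fm1 : Lm1 →ₗ[A] Mm1) : Prop :=
  ∀ (Q : Type u) [AddCommGroup Q] [Module A Q],
    (∀ x : TensorProduct A M0 Q, e0.rTensor Q x = 0 →
        ∃ y : TensorProduct A L0 Q, d0.rTensor Q y = 0 ∧
          f0.rTensor Q y - x ∈ LinearMap.range (e1.rTensor Q)) ∧
    (∀ y : TensorProduct A L0 Q, d0.rTensor Q y = 0 →
        f0.rTensor Q y ∈ LinearMap.range (e1.rTensor Q) →
        y ∈ LinearMap.range (d1.rTensor Q)) ∧
    (∀ z : TensorProduct A Lm1 Q, fm1.rTensor Q z ∈ LinearMap.range (e0.rTensor Q) →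
        z ∈ LinearMap.range (d0.rTensor Q))

open TensorProduct LinearMap

section Aux

variable {A : Type u} [CommRing A]

lemma rid_rTensor {X Y : Type u} [AddCommGroup X] [AddCommGroup Y] [Module A X] [Module A Y]
    (f : X →ₗ[A] Y) (x : TensorProduct A X A) :
    TensorProduct.rid A Y (f.rTensor A x) = f (TensorProduct.rid A X x) := by
  induction x using TensorProduct.induction_on with
  | zero => simp
  | tmul m r => simp
  | add a b ha hb => simp [map_add, ha, hb]

lemma flat_of_pure {N F : Type u} [AddCommGroup N] [Module A N] [AddCommGroup F] [Module A F]
    [Module.Flat A F] (g : N →ₗ[A] F)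
    (h : ∀ (Q : Type u) [AddCommGroup Q] [Module A Q], Function.Injective (g.rTensor Q)) :
    Module.Flat A N := by
  rw [Module.Flat.iff_lTensor_injective']
  intro I
  have h1 : Function.Injective (g.rTensor I) := h I
  have h2 : Function.Injective ((I.subtype).lTensor F) :=
    (Module.Flat.iff_lTensor_injective' (R := A) (M := F)).mp inferInstance I
  have key : ((I.subtype).lTensor F).comp (g.rTensor I)
      = (g.rTensor A).comp ((I.subtype).lTensor N) := by
    rw [LinearMap.lTensor_comp_rTensor, LinearMap.rTensor_comp_lTensor]
  intro x y hxy
  apply h1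
  apply h2
  have kx := LinearMap.congr_fun key x
  have ky := LinearMap.congr_fun key y
  simp only [LinearMap.comp_apply] at kx ky
  rw [kx, ky, hxy]

end Aux

section Main

variable {A : Type u} [CommRing A]
    {L1 L0 Lm1 M1 M0 Mm1 : Type u}
    [AddCommGroup L1] [AddCommGroup L0] [AddCommGroup Lm1]
    [AddCommGroup M1] [AddCommGroup M0] [AddCommGroup Mm1]
    [Module A L1] [Module A L0] [Module A Lm1]
    [Module A M1] [Module A M0] [Module A Mm1]

/-- Degree-2 differential of the mapping cone. -/
def del2 (d1 : L1 →ₗ[A] L0) (f1 : L1 →ₗ[A] M1) : L1 →ₗ[A] L0 × M1 :=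
  LinearMap.prod d1 (-f1)

/-- Degree-1 differential of the mapping cone. -/
def del1 (d0 : L0 →ₗ[A] Lm1) (e1 : M1 →ₗ[A] M0) (f0 : L0 →ₗ[A] M0) :
    L0 × M1 →ₗ[A] Lm1 × M0 :=
  LinearMap.prod (d0 ∘ₗ LinearMap.fst A L0 M1)
    ((f0 ∘ₗ LinearMap.fst A L0 M1) + (e1 ∘ₗ LinearMap.snd A L0 M1))

/-- Degree-0 differential of the mapping cone. -/
def del0 (e0 : M0 →ₗ[A] Mm1) (fm1 : Lm1 →ₗ[A] Mm1) : Lm1 × M0 →ₗ[A] Mm1 :=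
  (fm1 ∘ₗ LinearMap.fst A Lm1 M0) - (e0 ∘ₗ LinearMap.snd A Lm1 M0)

@[simp] lemma del2_apply (d1 : L1 →ₗ[A] L0) (f1 : L1 →ₗ[A] M1) (y : L1) :
    del2 d1 f1 y = (d1 y, -f1 y) := rfl

@[simp] lemma del1_apply (d0 : L0 →ₗ[A] Lm1) (e1 : M1 →ₗ[A] M0) (f0 : L0 →ₗ[A] M0)
    (v : L0 × M1) : del1 d0 e1 f0 v = (d0 v.1, f0 v.1 + e1 v.2) := rfl

@[simp] lemma del0_apply (e0 : M0 →ₗ[A] Mm1) (fm1 : Lm1 →ₗ[A] Mm1) (v : Lm1 × M0) :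
    del0 e0 fm1 v = fm1 v.1 - e0 v.2 := rfl

lemma del2_rTensor (d1 : L1 →ₗ[A] L0) (f1 : L1 →ₗ[A] M1)
    (Q : Type u) [AddCommGroup Q] [Module A Q] (y : TensorProduct A L1 Q) :
    (TensorProduct.prodLeft A A L0 M1 Q) ((del2 d1 f1).rTensor Q y)
      = (d1.rTensor Q y, -(f1.rTensor Q y)) := by
  induction y using TensorProduct.induction_on with
  | zero => simp; rfl
  | tmul m q => simp [neg_tmul]
  | add a b ha hb => simp [map_add, ha, hb, Prod.mk_add_mk]; abel

lemma del1_rTensor (d0 : L0 →ₗ[A] Lm1) (e1 : M1 →ₗ[A] M0) (f0 : L0 →ₗ[A] M0)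
    (Q : Type u) [AddCommGroup Q] [Module A Q] (u : TensorProduct A (L0 × M1) Q) :
    (TensorProduct.prodLeft A A Lm1 M0 Q) ((del1 d0 e1 f0).rTensor Q u)
      = (d0.rTensor Q ((TensorProduct.prodLeft A A L0 M1 Q) u).1,
         f0.rTensor Q ((TensorProduct.prodLeft A A L0 M1 Q) u).1
           + e1.rTensor Q ((TensorProduct.prodLeft A A L0 M1 Q) u).2) := by
  induction u using TensorProduct.induction_on with
  | zero => simp; rfl
  | tmul m q => obtain ⟨a, b⟩ := m; simp [add_tmul]
  | add x y hx hy => simp [map_add, hx, hy, Prod.mk_add_mk]; abel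

lemma del0_rTensor (e0 : M0 →ₗ[A] Mm1) (fm1 : Lm1 →ₗ[A] Mm1)
    (Q : Type u) [AddCommGroup Q] [Module A Q] (u : TensorProduct A (Lm1 × M0) Q) :
    (del0 e0 fm1).rTensor Q u
      = fm1.rTensor Q ((TensorProduct.prodLeft A A Lm1 M0 Q) u).1
          - e0.rTensor Q ((TensorProduct.prodLeft A A Lm1 M0 Q) u).2 := by
  induction u using TensorProduct.induction_on with
  | zero => simp
  | tmul m q => obtain ⟨a, b⟩ := m; simp [sub_tmul]
  | add x y hx hy => simp [map_add, hx, hy]; abel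

/-- Universal exactness of the cone at degree 0. -/
lemma stepA (d1 : L1 →ₗ[A] L0) (d0 : L0 →ₗ[A] Lm1)
    (e1 : M1 →ₗ[A] M0) (e0 : M0 →ₗ[A] Mm1)
    (f0 : L0 →ₗ[A] M0) (fm1 : Lm1 →ₗ[A] Mm1)
    (hsq0 : e0.comp f0 = fm1.comp d0)
    (hpsi : IsPsi d1 d0 e1 e0 f0 fm1)
    (Q : Type u) [AddCommGroup Q] [Module A Q]
    (u : TensorProduct A (Lm1 × M0) Q) (hu : (del0 e0 fm1).rTensor Q u = 0) :
    u ∈ LinearMap.range ((del1 d0 e1 f0).rTensor Q) := by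
  obtain ⟨hp1, hp2, hp3⟩ := hpsi Q
  set c := ((TensorProduct.prodLeft A A Lm1 M0 Q) u).1 with hc
  set m := ((TensorProduct.prodLeft A A Lm1 M0 Q) u).2 with hm
  have hcm : fm1.rTensor Q c = e0.rTensor Q m := by
    have h := del0_rTensor e0 fm1 Q u
    rw [hu] at h
    exact sub_eq_zero.mp h.symm
  obtain ⟨a, ha⟩ := hp3 c ⟨m, hcm.symm⟩
  have hm0 : e0.rTensor Q (m - f0.rTensor Q a) = 0 := by
    have hcomp : e0.rTensor Q (f0.rTensor Q a) = fm1.rTensor Q (d0.rTensor Q a) := by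
      rw [← LinearMap.rTensor_comp_apply, ← LinearMap.rTensor_comp_apply, hsq0]
    rw [map_sub, hcomp, ha, hcm, sub_self]
  obtain ⟨y, hy0, b, hb⟩ := hp1 (m - f0.rTensor Q a) hm0
  refine ⟨(TensorProduct.prodLeft A A L0 M1 Q).symm (a + y, -b), ?_⟩
  apply (TensorProduct.prodLeft A A Lm1 M0 Q).injective
  rw [del1_rTensor]
  simp only [LinearEquiv.apply_symm_apply]
  have : (c, m) = (TensorProduct.prodLeft A A Lm1 M0 Q) u := rfl
  rw [← this]
  refine Prod.ext ?_ ?_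
  · simp [map_add, ha, hy0]
  · simp only [map_add, map_neg]
    rw [hb]
    abel

/-- Exactness of the cone at degree 1, over `A` itself. -/
lemma stepA' (d1 : L1 →ₗ[A] L0) (d0 : L0 →ₗ[A] Lm1)
    (e1 : M1 →ₗ[A] M0) (e0 : M0 →ₗ[A] Mm1)
    (f1 : L1 →ₗ[A] M1) (f0 : L0 →ₗ[A] M0) (fm1 : Lm1 →ₗ[A] Mm1)
    (hsq1 : e1.comp f1 = f0.comp d1)
    (hpsi : IsPsi d1 d0 e1 e0 f0 fm1)
    (hsurj : ∀ x : M1, e1 x = 0 → ∃ y : L1, d1 y = 0 ∧ f1 y = x)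
    (v : L0 × M1) (hv : del1 d0 e1 f0 v = 0) :
    v ∈ LinearMap.range (del2 d1 f1) := by
  obtain ⟨a, b⟩ := v
  have h1 : d0 a = 0 := congrArg Prod.fst hv
  have h2 : f0 a + e1 b = 0 := congrArg Prod.snd hv
  obtain ⟨_, hp2, _⟩ := hpsi A
  have ha : (a ⊗ₜ[A] (1 : A)) ∈ LinearMap.range (d1.rTensor A) := by
    apply hp2
    · rw [LinearMap.rTensor_tmul, h1, TensorProduct.zero_tmul]
    · refine ⟨(-b) ⊗ₜ[A] (1 : A), ?_⟩
      rw [LinearMap.rTensor_tmul, LinearMap.rTensor_tmul, map_neg]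
      congr 1
      exact (eq_neg_of_add_eq_zero_left h2).symm
  obtain ⟨w, hw⟩ := ha
  set y0 := (TensorProduct.rid A L1) w with hy0
  have hda : d1 y0 = a := by
    have h := rid_rTensor d1 w
    rw [hw] at h
    simpa using h.symm
  have he1 : e1 (b + f1 y0) = 0 := by
    have h := LinearMap.congr_fun hsq1 y0
    simp only [LinearMap.comp_apply] at h
    rw [map_add, h, hda, add_comm, h2]
  obtain ⟨z, hz0, hz⟩ := hsurj _ he1
  refine ⟨y0 - z, ?_⟩
  rw [del2_apply, map_sub, map_sub, hda, hz0, hz]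
  refine Prod.ext ?_ ?_ <;> simp


end Main

/-- (1.16, last clause) If a pseudo-isomorphism of three-term complexes of flat
modules moreover induces a surjection `h₁(L•) → h₁(L•')` on degree-one homology,
then for every `A`-module `Q` the induced map `h₁(L• ⊗ Q) → h₁(L•' ⊗ Q)` is
surjective. -/
theorem stmt5 {A : Type u} [CommRing A]
    {L1 L0 Lm1 M1 M0 Mm1 : Type u}
    [AddCommGroup L1] [AddCommGroup L0] [AddCommGroup Lm1]
    [AddCommGroup M1] [AddCommGroup M0] [AddCommGroup Mm1]
    [Module A L1] [Module A L0] [Module A Lm1]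
    [Module A M1] [Module A M0] [Module A Mm1]
    [Module.Flat A L1] [Module.Flat A L0] [Module.Flat A Lm1]
    [Module.Flat A M1] [Module.Flat A M0] [Module.Flat A Mm1]
    (d1 : L1 →ₗ[A] L0) (d0 : L0 →ₗ[A] Lm1) (hd : d0.comp d1 = 0)
    (e1 : M1 →ₗ[A] M0) (e0 : M0 →ₗ[A] Mm1) (he : e0.comp e1 = 0)
    (f1 : L1 →ₗ[A] M1) (f0 : L0 →ₗ[A] M0) (fm1 : Lm1 →ₗ[A] Mm1)
    (hsq1 : e1.comp f1 = f0.comp d1) (hsq0 : e0.comp f0 = fm1.comp d0)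
    (hpsi : IsPsi d1 d0 e1 e0 f0 fm1)
    (hsurj : ∀ x : M1, e1 x = 0 → ∃ y : L1, d1 y = 0 ∧ f1 y = x) :
    ∀ (Q : Type u) [AddCommGroup Q] [Module A Q],
      ∀ x : TensorProduct A M1 Q, e1.rTensor Q x = 0 →
        ∃ y : TensorProduct A L1 Q, d1.rTensor Q y = 0 ∧ f1.rTensor Q y = x := by
  intro Q _ _ x hx
  set B0 : Submodule A (Lm1 × M0) := LinearMap.range (del1 d0 e1 f0) with hB0def
  have hle : B0 ≤ LinearMap.ker (del0 e0 fm1) := by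
    rintro _ ⟨v, rfl⟩
    have h1 := LinearMap.congr_fun hsq0 v.1
    have h2 := LinearMap.congr_fun he v.2
    simp only [LinearMap.comp_apply, LinearMap.zero_apply] at h1 h2
    simp only [LinearMap.mem_ker, del1_apply, del0_apply, map_add]
    rw [h1, h2]
    abel
  set g : ((Lm1 × M0) ⧸ B0) →ₗ[A] Mm1 := B0.liftQ (del0 e0 fm1) hle with hgdef
  have hgmk : g ∘ₗ B0.mkQ = del0 e0 fm1 := B0.liftQ_mkQ _ _
  have hmkdel : B0.mkQ ∘ₗ (del1 d0 e1 f0) = 0 := by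
    apply LinearMap.ext; intro v
    simp only [LinearMap.comp_apply, LinearMap.zero_apply, Submodule.mkQ_apply,
      Submodule.Quotient.mk_eq_zero]
    exact ⟨v, rfl⟩
  have hginj : ∀ (Q' : Type u) [AddCommGroup Q'] [Module A Q'],
      Function.Injective (g.rTensor Q') := by
    intro Q' _ _
    rw [injective_iff_map_eq_zero]
    intro v hv
    obtain ⟨w, rfl⟩ := LinearMap.rTensor_surjective Q' (Submodule.mkQ_surjective B0) v
    rw [← LinearMap.rTensor_comp_apply, hgmk] at hv
    obtain ⟨w', hw'⟩ := stepA d1 d0 e1 e0 f0 fm1 hsq0 hpsi Q' w hv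
    rw [← hw', ← LinearMap.rTensor_comp_apply, hmkdel, LinearMap.rTensor_zero,
      LinearMap.zero_apply]
  haveI hNflat : Module.Flat A ((Lm1 × M0) ⧸ B0) := flat_of_pure g hginj
  have hsub : Function.Injective ((B0.subtype).rTensor Q) := by
    rw [← LinearMap.lTensor_inj_iff_rTensor_inj]
    exact lTensor_injective_of_exact_of_exact_of_rTensor_injective
      (LinearMap.exact_subtype_ker_map (Finsupp.linearCombination A (id : Q → Q)))
      (Finsupp.linearCombination_id_surjective A Q)
      (LinearMap.exact_subtype_mkQ B0)
      (Submodule.mkQ_surjective B0)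
      (Module.Flat.rTensor_preserves_injective_linearMap _ (Submodule.injective_subtype _))
      (Module.Flat.lTensor_preserves_injective_linearMap _ (Submodule.injective_subtype _))
  set p := (del1 d0 e1 f0).rangeRestrict with hpdef
  have hsubp : B0.subtype ∘ₗ p = del1 d0 e1 f0 := by
    apply LinearMap.ext; intro v; rfl
  have hdd : ∀ y : L1, del1 d0 e1 f0 (del2 d1 f1 y) = 0 := by
    intro y
    have h1 := LinearMap.congr_fun hd y
    have h2 := LinearMap.congr_fun hsq1 y
    simp only [LinearMap.comp_apply, LinearMap.zero_apply] at h1 h2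
    simp only [del2_apply, del1_apply, map_neg]
    refine Prod.ext (by simpa using h1) ?_
    show f0 (d1 y) + -(e1 (f1 y)) = (0 : Lm1 × M0).2
    rw [h2]
    simp
  have hexact : Function.Exact (del2 d1 f1) p := by
    intro v
    constructor
    · intro hv0
      have hz : del1 d0 e1 f0 v = 0 := by
        have h := LinearMap.congr_fun hsubp v
        simp only [LinearMap.comp_apply] at h
        rw [← h, hv0, map_zero]
      obtain ⟨y, hy⟩ := stepA' d1 d0 e1 e0 f1 f0 fm1 hsq1 hpsi hsurj v hz
      exact ⟨y, hy⟩
    · rintro ⟨y, rfl⟩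
      have h := LinearMap.congr_fun hsubp (del2 d1 f1 y)
      simp only [LinearMap.comp_apply] at h
      apply Submodule.injective_subtype B0
      rw [h, hdd y, map_zero]
  have hpsurj : Function.Surjective p := (del1 d0 e1 f0).surjective_rangeRestrict
  have hTexact := rTensor_exact (f := del2 d1 f1) (g := p) Q hexact hpsurj
  set u := (TensorProduct.prodLeft A A L0 M1 Q).symm (0, -x) with hudef
  have hplu : (TensorProduct.prodLeft A A L0 M1 Q) u = (0, -x) :=
    (TensorProduct.prodLeft A A L0 M1 Q).apply_symm_apply _
  have hu0 : (del1 d0 e1 f0).rTensor Q u = 0 := by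
    apply (TensorProduct.prodLeft A A Lm1 M0 Q).injective
    rw [del1_rTensor, hplu]
    simp [hx]
  have hpu : p.rTensor Q u = 0 := by
    apply hsub
    rw [← LinearMap.rTensor_comp_apply, hsubp, hu0, map_zero]
  obtain ⟨y, hy⟩ := (hTexact u).mp hpu
  have h2 := del2_rTensor d1 f1 Q y
  rw [hy, hplu] at h2
  refine ⟨y, (congrArg Prod.fst h2).symm, ?_⟩
  have := congrArg Prod.snd h2
  simp only at this
  exact neg_injective this.symm
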